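/- arXiv:1011.5237 — 4 statements merged into one kernel-verified Lean document; each statement's English description precedes it below -/
import Mathlib

section
/- Let T be a product of two orthogonal projections on a Hilbert space H. Then T admits exactly one factorization T = P_M P_N with M, N closed subspaces if and only if R(T)^⊥ ∩ N(T) = {0}. -/
open ContinuousLinearMap Submodule LinearMap

variable {H : Type*} [NormedAddCommGroup H] [InnerProductSpace ℂ H] [CompleteSpace H]

local notation "⟪" x ", " y "⟫" => @inner ℂ H _ x y

/-- `P` is an orthogonal projection: `P² = P = P*`. -/
def IsOrthoProj (P : H →L[ℂ] H) : Prop :=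
  P ∘L P = P ∧ ContinuousLinearMap.adjoint P = P

/-- The orthogonal projection onto a (complete, i.e. closed) subspace,
as an operator on `H`. -/
noncomputable def projOn (K : Submodule ℂ H) [CompleteSpace K] : H →L[ℂ] H :=
  K.subtypeL.comp (orthogonalProjection K)

/-- The orthogonal projection onto a closed subspace, as an operator on `H`. -/
noncomputable def projOnc (K : Submodule ℂ H) (hK : IsClosed (K : Set H)) : H →L[ℂ] H :=
  haveI : CompleteSpace K := hK.completeSpace_coe
  K.subtypeL.comp (orthogonalProjection K)

section helpers

variable {K : Submodule ℂ H} (hK : IsClosed (K : Set H))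

lemma projOnc_mem (x : H) : projOnc K hK x ∈ K := by
  haveI := hK.completeSpace_coe
  exact (orthogonalProjection K x).2

lemma sub_projOnc_mem (x : H) : x - projOnc K hK x ∈ Kᗮ := by
  haveI := hK.completeSpace_coe
  exact sub_starProjection_mem_orthogonal (K := K) x

lemma projOnc_eq_of {x v : H} (hv : v ∈ K) (hxv : x - v ∈ Kᗮ) : projOnc K hK x = v := by
  haveI := hK.completeSpace_coe
  exact eq_starProjection_of_mem_orthogonal hv hxv

lemma projOnc_apply_mem {x : H} (hx : x ∈ K) : projOnc K hK x = x :=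
  projOnc_eq_of hK hx (by simp)

lemma projOnc_apply_orthogonal {x : H} (hx : x ∈ Kᗮ) : projOnc K hK x = 0 :=
  projOnc_eq_of hK (zero_mem K) (by simpa using hx)

lemma projOnc_idem (x : H) : projOnc K hK (projOnc K hK x) = projOnc K hK x :=
  projOnc_apply_mem hK (projOnc_mem hK x)

lemma projOnc_inner (x y : H) : ⟪projOnc K hK x, y⟫ = ⟪x, projOnc K hK y⟫ := by
  have h1 : ⟪projOnc K hK x, y - projOnc K hK y⟫ = 0 :=
    Submodule.inner_right_of_mem_orthogonal (projOnc_mem hK x) (sub_projOnc_mem hK y)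
  have h2 : ⟪x - projOnc K hK x, projOnc K hK y⟫ = 0 :=
    Submodule.inner_left_of_mem_orthogonal (projOnc_mem hK y) (sub_projOnc_mem hK x)
  rw [inner_sub_right] at h1
  rw [inner_sub_left] at h2
  rw [sub_eq_zero] at h1 h2
  rw [h1, h2]
  
end helpers

lemma range_eq_fixed {P : H →L[ℂ] H} (hP : IsOrthoProj P) :
    ((LinearMap.range (P : H →ₗ[ℂ] H) : Submodule ℂ H) : Set H) = {x | P x = x} := by
  ext x
  constructor
  · rintro ⟨y, rfl⟩
    have := ContinuousLinearMap.ext_iff.mp hP.1 y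
    simpa [ContinuousLinearMap.comp_apply] using this
  · intro hx
    exact ⟨x, hx⟩

lemma isClosed_range_of_orthoProj {P : H →L[ℂ] H} (hP : IsOrthoProj P) :
    IsClosed ((LinearMap.range (P : H →ₗ[ℂ] H) : Submodule ℂ H) : Set H) := by
  rw [range_eq_fixed hP]
  exact isClosed_eq P.continuous continuous_id

lemma orthoProj_eq_projOnc {P : H →L[ℂ] H} (hP : IsOrthoProj P) (x : H) :
    P x = projOnc (LinearMap.range (P : H →ₗ[ℂ] H)) (isClosed_range_of_orthoProj hP) x := by
  symm
  apply projOnc_eq_of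
  · exact LinearMap.mem_range_self _ x
  · rw [Submodule.mem_orthogonal]
    rintro u ⟨y, rfl⟩
    have hadj : ∀ a b : H, ⟪P a, b⟫ = ⟪a, P b⟫ := by
      intro a b
      conv_lhs => rw [← hP.2]
      exact ContinuousLinearMap.adjoint_inner_left P b a
    rw [ContinuousLinearMap.coe_coe, hadj y (x - P x), map_sub]
    have hPP : P (P x) = P x := by
      have := ContinuousLinearMap.ext_iff.mp hP.1 x
      simpa [ContinuousLinearMap.comp_apply] using this
    simp [hPP]

/-- Splitting off a closed subspace `S ≤ K`. -/
lemma projOnc_split {K S : Submodule ℂ H} (hK : IsClosed (K : Set H))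
    (hS : IsClosed (S : Set H)) (hSK : S ≤ K) (x : H) :
    projOnc K hK x
      = projOnc (K ⊓ Sᗮ) (by rw [Submodule.coe_inf]; exact hK.inter (Submodule.isClosed_orthogonal S)) x
        + projOnc S hS x := by
  set hK' : IsClosed ((K ⊓ Sᗮ : Submodule ℂ H) : Set H) :=
    (by rw [Submodule.coe_inf]; exact hK.inter (Submodule.isClosed_orthogonal S))
  set a := projOnc (K ⊓ Sᗮ) hK' x with ha
  set b := projOnc S hS x with hb
  apply projOnc_eq_of
  · exact add_mem ((projOnc_mem hK' x).1) (hSK (projOnc_mem hS x))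
  · rw [Submodule.mem_orthogonal]
    intro k hk
    set s := projOnc S hS k with hs
    set k' := k - s with hk'def
    have hk'mem : k' ∈ K ⊓ Sᗮ := ⟨sub_mem hk (hSK (projOnc_mem hS k)), sub_projOnc_mem hS k⟩
    have e1 : ⟪k', x - a⟫ = 0 :=
      Submodule.inner_right_of_mem_orthogonal hk'mem (sub_projOnc_mem hK' x)
    have e2 : ⟪k', b⟫ = 0 :=
      Submodule.inner_left_of_mem_orthogonal (projOnc_mem hS x) hk'mem.2
    have e3 : ⟪s, x - b⟫ = 0 :=
      Submodule.inner_right_of_mem_orthogonal (projOnc_mem hS k) (sub_projOnc_mem hS x)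
    have e4 : ⟪s, a⟫ = 0 :=
      Submodule.inner_right_of_mem_orthogonal (projOnc_mem hS k) (projOnc_mem hK' x).2
    have hks : k = k' + s := by simp [hk'def]
    calc ⟪k, x - (a + b)⟫ = ⟪k', x - a⟫ - ⟪k', b⟫ + (⟪s, x - b⟫ - ⟪s, a⟫) := by
          rw [hks]; simp only [inner_add_left, inner_add_right, inner_sub_right]; ring
      _ = 0 := by rw [e1, e2, e3, e4]; ring

/-- Joining a closed subspace `S ≤ Kᗮ`. -/
lemma projOnc_join {K S : Submodule ℂ H} (hK : IsClosed (K : Set H))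
    (hS : IsClosed (S : Set H)) (hSK : S ≤ Kᗮ) (x : H) :
    projOnc ((Kᗮ ⊓ Sᗮ)ᗮ) (Submodule.isClosed_orthogonal _) x
      = projOnc K hK x + projOnc S hS x := by
  have hKle : K ≤ (Kᗮ ⊓ Sᗮ)ᗮ :=
    le_trans (Submodule.le_orthogonal_orthogonal K) (Submodule.orthogonal_le inf_le_left)
  have hSle : S ≤ (Kᗮ ⊓ Sᗮ)ᗮ :=
    le_trans (Submodule.le_orthogonal_orthogonal S) (Submodule.orthogonal_le inf_le_right)
  have hKS : K ≤ Sᗮ :=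
    le_trans (Submodule.le_orthogonal_orthogonal K) (Submodule.orthogonal_le hSK)
  apply projOnc_eq_of
  · exact add_mem (hKle (projOnc_mem hK x)) (hSle (projOnc_mem hS x))
  · apply Submodule.le_orthogonal_orthogonal (Kᗮ ⊓ Sᗮ)
    constructor
    · have : x - (projOnc K hK x + projOnc S hS x) = (x - projOnc K hK x) - projOnc S hS x := by
        abel
      rw [this]
      exact sub_mem (sub_projOnc_mem hK x) (hSK (projOnc_mem hS x))
    · have : x - (projOnc K hK x + projOnc S hS x) = (x - projOnc S hS x) - projOnc K hK x := by
        abel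
      rw [this]
      exact sub_mem (sub_projOnc_mem hS x) (hKS (projOnc_mem hK x))

lemma canonical_pair {T : H →L[ℂ] H} {M N : Submodule ℂ H}
    (hM : IsClosed (M : Set H)) (hN : IsClosed (N : Set H))
    (hT : T = projOnc M hM ∘L projOnc N hN)
    (h : (LinearMap.range (T : H →ₗ[ℂ] H))ᗮ ⊓ LinearMap.ker (T : H →ₗ[ℂ] H) = ⊥) :
    M = ((LinearMap.range (T : H →ₗ[ℂ] H))ᗮ)ᗮ ∧ N = (LinearMap.ker (T : H →ₗ[ℂ] H))ᗮ := by
  haveI : CompleteSpace M := hM.completeSpace_coe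
  haveI : CompleteSpace N := hN.completeSpace_coe
  have hTx : ∀ x, T x = projOnc M hM (projOnc N hN x) := fun x => by rw [hT]; rfl
  have hbot : ∀ w, w ∈ (LinearMap.range (T : H →ₗ[ℂ] H))ᗮ → w ∈ LinearMap.ker (T : H →ₗ[ℂ] H) → w = 0 := by
    intro w h1 h2
    have : w ∈ (LinearMap.range (T : H →ₗ[ℂ] H))ᗮ ⊓ LinearMap.ker (T : H →ₗ[ℂ] H) := ⟨h1, h2⟩
    rw [h] at this
    simpa using this
  have hrange : LinearMap.range (T : H →ₗ[ℂ] H) ≤ M := by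
    rintro _ ⟨x, rfl⟩
    rw [ContinuousLinearMap.coe_coe, hTx]
    exact projOnc_mem hM _
  have hkey1 : (LinearMap.range (T : H →ₗ[ℂ] H))ᗮ ≤ Mᗮ := by
    intro u hu
    set w := projOnc M hM u with hw
    have hQPu : projOnc N hN w = 0 := by
      have hz : ⟪projOnc N hN w, projOnc N hN w⟫ = 0 := by
        calc ⟪projOnc N hN w, projOnc N hN w⟫
            = ⟪w, projOnc N hN (projOnc N hN w)⟫ := projOnc_inner hN _ _
          _ = ⟪u, projOnc M hM (projOnc N hN (projOnc N hN w))⟫ := projOnc_inner hM _ _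
          _ = ⟪u, T (projOnc N hN w)⟫ := by rw [hTx]
          _ = 0 := Submodule.inner_left_of_mem_orthogonal (LinearMap.mem_range_self _ _) hu
      exact inner_self_eq_zero.mp hz
    have hw1 : w ∈ LinearMap.ker (T : H →ₗ[ℂ] H) := by
      rw [LinearMap.mem_ker, ContinuousLinearMap.coe_coe, hTx, hQPu, map_zero]
    have hw2 : w ∈ (LinearMap.range (T : H →ₗ[ℂ] H))ᗮ := by
      rw [Submodule.mem_orthogonal]
      rintro _ ⟨x, rfl⟩
      calc ⟪T x, w⟫ = ⟪projOnc M hM (projOnc N hN x), w⟫ := by rw [hTx]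
        _ = ⟪projOnc N hN x, projOnc M hM w⟫ := by
              rw [projOnc_inner hM]
        _ = ⟪projOnc N hN x, w⟫ := by rw [hw, projOnc_idem hM]
        _ = ⟪x, projOnc N hN w⟫ := projOnc_inner hN _ _
        _ = 0 := by rw [hQPu, inner_zero_right]
    have hw0 : w = 0 := hbot w hw2 hw1
    have := sub_projOnc_mem hM u
    rw [← hw, hw0, sub_zero] at this
    exact this
  have hker : LinearMap.ker (T : H →ₗ[ℂ] H) = Nᗮ := by
    apply le_antisymm
    · intro x hx
      rw [LinearMap.mem_ker, ContinuousLinearMap.coe_coe, hTx] at hx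
      set w := projOnc N hN x with hw
      have hw1 : w ∈ LinearMap.ker (T : H →ₗ[ℂ] H) := by
        rw [LinearMap.mem_ker, ContinuousLinearMap.coe_coe, hTx, hw, projOnc_idem hN, ← hw, hx]
      have hw2 : w ∈ (LinearMap.range (T : H →ₗ[ℂ] H))ᗮ := by
        rw [Submodule.mem_orthogonal]
        rintro _ ⟨y, rfl⟩
        calc ⟪T y, w⟫ = ⟪projOnc M hM (projOnc N hN y), w⟫ := by rw [hTx]
          _ = ⟪projOnc N hN y, projOnc M hM w⟫ := by rw [projOnc_inner hM]
          _ = 0 := by rw [hx, inner_zero_right]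
      have hw0 : w = 0 := hbot w hw2 hw1
      have := sub_projOnc_mem hN x
      rw [← hw, hw0, sub_zero] at this
      exact this
    · intro x hx
      rw [LinearMap.mem_ker, ContinuousLinearMap.coe_coe, hTx, projOnc_apply_orthogonal hN hx, map_zero]
  constructor
  · apply le_antisymm
    · exact le_trans (Submodule.le_orthogonal_orthogonal M) (Submodule.orthogonal_le hkey1)
    · have : ((LinearMap.range (T : H →ₗ[ℂ] H))ᗮ)ᗮ ≤ Mᗮᗮ :=
        Submodule.orthogonal_le (Submodule.orthogonal_le hrange)
      rwa [M.orthogonal_orthogonal] at this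
  · rw [hker, N.orthogonal_orthogonal]

lemma QP_zero {T : H →L[ℂ] H} {M N : Submodule ℂ H}
    (hM : IsClosed (M : Set H)) (hN : IsClosed (N : Set H))
    (hT : T = projOnc M hM ∘L projOnc N hN) {u : H}
    (hu : u ∈ (LinearMap.range (T : H →ₗ[ℂ] H))ᗮ) :
    projOnc N hN (projOnc M hM u) = 0 := by
  have hTx : ∀ x, T x = projOnc M hM (projOnc N hN x) := fun x => by rw [hT]; rfl
  have hz : ⟪projOnc N hN (projOnc M hM u), projOnc N hN (projOnc M hM u)⟫ = 0 := by
    calc ⟪projOnc N hN (projOnc M hM u), projOnc N hN (projOnc M hM u)⟫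
        = ⟪projOnc M hM u, projOnc N hN (projOnc N hN (projOnc M hM u))⟫ := projOnc_inner hN _ _
      _ = ⟪u, projOnc M hM (projOnc N hN (projOnc N hN (projOnc M hM u)))⟫ := projOnc_inner hM _ _
      _ = ⟪u, T (projOnc N hN (projOnc M hM u))⟫ := by rw [hTx]
      _ = 0 := Submodule.inner_left_of_mem_orthogonal (LinearMap.mem_range_self _ _) hu
  exact inner_self_eq_zero.mp hz

lemma exists_pair {T : H →L[ℂ] H}
    (hX : ∃ P Q : H →L[ℂ] H, IsOrthoProj P ∧ IsOrthoProj Q ∧ T = P ∘L Q) :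
    ∃ (M N : Submodule ℂ H) (hM : IsClosed ((M : Submodule ℂ H) : Set H))
      (hN : IsClosed ((N : Submodule ℂ H) : Set H)),
      T = projOnc M hM ∘L projOnc N hN := by
  obtain ⟨P, Q, hP, hQ, hT⟩ := hX
  refine ⟨LinearMap.range (P : H →ₗ[ℂ] H), LinearMap.range (Q : H →ₗ[ℂ] H), isClosed_range_of_orthoProj hP,
    isClosed_range_of_orthoProj hQ, ?_⟩
  ext x
  rw [hT]
  simp only [ContinuousLinearMap.comp_apply]
  rw [orthoProj_eq_projOnc hQ, orthoProj_eq_projOnc hP]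

theorem stmt10 (T : H →L[ℂ] H)
    (hX : ∃ P Q : H →L[ℂ] H, IsOrthoProj P ∧ IsOrthoProj Q ∧ T = P ∘L Q) :
    (∃! p : Submodule ℂ H × Submodule ℂ H,
        ∃ (hM : IsClosed ((p.1 : Submodule ℂ H) : Set H))
          (hN : IsClosed ((p.2 : Submodule ℂ H) : Set H)),
          T = projOnc p.1 hM ∘L projOnc p.2 hN) ↔
      (LinearMap.range (T : H →ₗ[ℂ] H))ᗮ ⊓ LinearMap.ker (T : H →ₗ[ℂ] H) = ⊥ := by
  obtain ⟨M, N, hM, hN, hT⟩ := exists_pair hX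
  haveI : CompleteSpace M := hM.completeSpace_coe
  haveI : CompleteSpace N := hN.completeSpace_coe
  have hTx : ∀ x, T x = projOnc M hM (projOnc N hN x) := fun x => by rw [hT]; rfl
  constructor
  · intro hu
    by_contra hne
    rw [Submodule.eq_bot_iff] at hne
    push_neg at hne
    obtain ⟨v, hv, hv0⟩ := hne
    have hvr : v ∈ (LinearMap.range (T : H →ₗ[ℂ] H))ᗮ := hv.1
    have hvk : T v = 0 := LinearMap.mem_ker.mp hv.2
    have hPQ : projOnc M hM (projOnc N hN v) = 0 := by rw [← hTx]; exact hvk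
    have hQP : projOnc N hN (projOnc M hM v) = 0 := QP_zero hM hN hT hvr
    set a := projOnc M hM v with ha
    set b := projOnc N hN v with hb
    set w := v - a - b with hw
    have haM : a ∈ M := projOnc_mem hM v
    have hbN : b ∈ N := projOnc_mem hN v
    have haN : a ∈ Nᗮ := by
      have := sub_projOnc_mem hN a
      rwa [hQP, sub_zero] at this
    have hbM : b ∈ Mᗮ := by
      have := sub_projOnc_mem hM b
      rwa [hPQ, sub_zero] at this
    have hwM : w ∈ Mᗮ := by
      have hPw : projOnc M hM w = 0 := by
        rw [hw]
        rw [map_sub, map_sub, projOnc_apply_mem hM haM, hPQ, ← ha]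
        simp
      have := sub_projOnc_mem hM w
      rwa [hPw, sub_zero] at this
    have hwN : w ∈ Nᗮ := by
      have hQw : projOnc N hN w = 0 := by
        rw [hw]
        rw [map_sub, map_sub, projOnc_apply_mem hN hbN, hQP, ← hb]
        simp
      have := sub_projOnc_mem hN w
      rwa [hQw, sub_zero] at this
    by_cases hb0 : b = 0
    · by_cases ha0 : a = 0
      · -- w ≠ 0, w ∈ Mᗮ ⊓ Nᗮ : enlarge N
        have hw0 : w ≠ 0 := by
          intro hwz
          apply hv0
          have : v = a + b + w := by rw [hw]; abel
          rw [this, ha0, hb0, hwz]; simp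
        have hS : IsClosed ((ℂ ∙ w : Submodule ℂ H) : Set H) :=
          Submodule.closed_of_finiteDimensional _
        set S : Submodule ℂ H := ℂ ∙ w with hSdef
        have hSN : S ≤ Nᗮ := (Submodule.span_singleton_le_iff_mem w _).mpr hwN
        have hSM : S ≤ Mᗮ := (Submodule.span_singleton_le_iff_mem w _).mpr hwM
        set N'' : Submodule ℂ H := (Nᗮ ⊓ Sᗮ)ᗮ with hN''def
        have hN'' : IsClosed (N'' : Set H) := Submodule.isClosed_orthogonal _
        have hT2 : T = projOnc M hM ∘L projOnc N'' hN'' := by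
          ext x
          simp only [ContinuousLinearMap.comp_apply]
          rw [hTx, projOnc_join hN hS hSN x, map_add,
            projOnc_apply_orthogonal hM (hSM (projOnc_mem hS x)), add_zero]
        have heq : ((M, N) : Submodule ℂ H × Submodule ℂ H) = (M, N'') :=
          hu.unique ⟨hM, hN, hT⟩ ⟨hM, hN'', hT2⟩
        have hNN : N = N'' := congrArg Prod.snd heq
        have hwmem : w ∈ N := by
          rw [hNN]
          exact le_trans (Submodule.le_orthogonal_orthogonal S)
            (Submodule.orthogonal_le inf_le_right) (Submodule.mem_span_singleton_self w)
        exact hw0 (inner_self_eq_zero.mp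
          (Submodule.inner_right_of_mem_orthogonal hwmem hwN))
      · -- a ≠ 0, a ∈ M ⊓ Nᗮ : shrink M
        have hS : IsClosed ((ℂ ∙ a : Submodule ℂ H) : Set H) :=
          Submodule.closed_of_finiteDimensional _
        set S : Submodule ℂ H := ℂ ∙ a with hSdef
        have hSM : S ≤ M := (Submodule.span_singleton_le_iff_mem a _).mpr haM
        have hSN : S ≤ Nᗮ := (Submodule.span_singleton_le_iff_mem a _).mpr haN
        have hNS : N ≤ Sᗮ :=
          le_trans (Submodule.le_orthogonal_orthogonal N) (Submodule.orthogonal_le hSN)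
        have hM' : IsClosed ((M ⊓ Sᗮ : Submodule ℂ H) : Set H) := by
          rw [Submodule.coe_inf]; exact hM.inter (Submodule.isClosed_orthogonal S)
        have hT2 : T = projOnc (M ⊓ Sᗮ) hM' ∘L projOnc N hN := by
          ext x
          simp only [ContinuousLinearMap.comp_apply]
          rw [hTx, projOnc_split hM hS hSM (projOnc N hN x),
            projOnc_apply_orthogonal hS (hNS (projOnc_mem hN x)), add_zero]
        have heq : ((M, N) : Submodule ℂ H × Submodule ℂ H) = (M ⊓ Sᗮ, N) :=
          hu.unique ⟨hM, hN, hT⟩ ⟨hM', hN, hT2⟩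
        have hMM : M = M ⊓ Sᗮ := congrArg Prod.fst heq
        have hamem : a ∈ Sᗮ := by
          have : a ∈ M ⊓ Sᗮ := by rw [← hMM]; exact haM
          exact this.2
        exact ha0 (inner_self_eq_zero.mp
          (Submodule.inner_right_of_mem_orthogonal (Submodule.mem_span_singleton_self a) hamem))
    · -- b ≠ 0, b ∈ N ⊓ Mᗮ : shrink N
      have hS : IsClosed ((ℂ ∙ b : Submodule ℂ H) : Set H) :=
        Submodule.closed_of_finiteDimensional _
      set S : Submodule ℂ H := ℂ ∙ b with hSdef
      have hSN : S ≤ N := (Submodule.span_singleton_le_iff_mem b _).mpr hbN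
      have hSM : S ≤ Mᗮ := (Submodule.span_singleton_le_iff_mem b _).mpr hbM
      have hN' : IsClosed ((N ⊓ Sᗮ : Submodule ℂ H) : Set H) := by
        rw [Submodule.coe_inf]; exact hN.inter (Submodule.isClosed_orthogonal S)
      have hT2 : T = projOnc M hM ∘L projOnc (N ⊓ Sᗮ) hN' := by
        ext x
        simp only [ContinuousLinearMap.comp_apply]
        rw [hTx, projOnc_split hN hS hSN x, map_add,
          projOnc_apply_orthogonal hM (hSM (projOnc_mem hS x)), add_zero]
      have heq : ((M, N) : Submodule ℂ H × Submodule ℂ H) = (M, N ⊓ Sᗮ) :=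
        hu.unique ⟨hM, hN, hT⟩ ⟨hM, hN', hT2⟩
      have hNN : N = N ⊓ Sᗮ := congrArg Prod.snd heq
      have hbmem : b ∈ Sᗮ := by
        have : b ∈ N ⊓ Sᗮ := by rw [← hNN]; exact hbN
        exact this.2
      exact hb0 (inner_self_eq_zero.mp
        (Submodule.inner_right_of_mem_orthogonal (Submodule.mem_span_singleton_self b) hbmem))
  · intro h
    refine ⟨(M, N), ⟨hM, hN, hT⟩, ?_⟩
    rintro ⟨M', N'⟩ ⟨hM', hN', hT'⟩
    obtain ⟨e1, e2⟩ := canonical_pair hM' hN' hT' h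
    obtain ⟨e3, e4⟩ := canonical_pair hM hN hT h
    exact Prod.ext_iff.mpr ⟨e1.trans e3.symm, e2.trans e4.symm⟩
end

section
/- Let T be a product of two orthogonal projections on a Hilbert space H and suppose T = P_M P_N for closed subspaces M, N. Then for all x ∈ H, ‖(P_M − P_N)x‖ ≥ ‖(P_{cl R(T)} − P_{N(T)^⊥})x‖; equivalently (P_M − P_N)² ≥ (P_{cl R(T)} − P_{N(T)^⊥})² in the operator order. -/
open ContinuousLinearMap Submodule LinearMap

open scoped ComplexInnerProductSpace

variable {H : Type*} [NormedAddCommGroup H] [InnerProductSpace ℂ H] [CompleteSpace H]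

lemma projOn_apply (K : Submodule ℂ H) [CompleteSpace K] (x : H) :
    projOn K x = (orthogonalProjection K x : H) := rfl

lemma projOn_mem (K : Submodule ℂ H) [CompleteSpace K] (x : H) : projOn K x ∈ K :=
  (orthogonalProjection K x).2

lemma projOn_eq_self (K : Submodule ℂ H) [CompleteSpace K] {x : H} (hx : x ∈ K) :
    projOn K x = x := by
  rw [projOn_apply]; exact (Submodule.starProjection_eq_self_iff (K := K)).2 hx

lemma projOn_idem (K : Submodule ℂ H) [CompleteSpace K] : projOn K ∘L projOn K = projOn K := by
  ext x
  exact projOn_eq_self K (projOn_mem K x)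

lemma projOn_sa (K : Submodule ℂ H) [CompleteSpace K] : IsSelfAdjoint (projOn K) :=
  isSelfAdjoint_starProjection K

lemma projOn_comp_of_le {R M : Submodule ℂ H} [CompleteSpace R] [CompleteSpace M] (h : R ≤ M) :
    projOn R ∘L projOn M = projOn R := by
  ext x
  simp only [ContinuousLinearMap.comp_apply, projOn_apply]
  exact congrArg Subtype.val (Submodule.orthogonalProjectionOnto_starProjection_of_le h x)

lemma projOn_norm_le (K : Submodule ℂ H) [CompleteSpace K] (x : H) : ‖projOn K x‖ ≤ ‖x‖ := by
  rw [projOn_apply]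
  calc ‖(orthogonalProjection K x : H)‖ = ‖orthogonalProjection K x‖ := rfl
    _ ≤ ‖orthogonalProjection K‖ * ‖x‖ := (orthogonalProjection K).le_opNorm x
    _ ≤ 1 * ‖x‖ := by
        exact mul_le_mul_of_nonneg_right (orthogonalProjection_norm_le K) (norm_nonneg x)
    _ = ‖x‖ := one_mul _

lemma re_inner_projOn (K : Submodule ℂ H) [CompleteSpace K] (x : H) :
    RCLike.re ⟪projOn K x, x⟫ = ‖projOn K x‖ ^ 2 := by
  have h0 : ⟪x - projOn K x, projOn K x⟫ = 0 :=
    Submodule.starProjection_inner_eq_zero (K := K) x _ (projOn_mem K x)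
  have h1 : ⟪projOn K x, x - projOn K x⟫ = 0 := by
    rw [inner_eq_zero_symm]; exact h0
  have : ⟪projOn K x, x⟫ = ⟪projOn K x, projOn K x⟫ := by
    have := inner_sub_right (𝕜 := ℂ) (projOn K x) x (projOn K x)
    linear_combination h1 - this
  rw [this, inner_self_eq_norm_sq]

lemma isPositive_projOn_sub {R M : Submodule ℂ H} [CompleteSpace R] [CompleteSpace M]
    (h : R ≤ M) : (projOn M - projOn R).IsPositive := by
  refine ⟨ContinuousLinearMap.isSelfAdjoint_iff_isSymmetric.mp ((projOn_sa M).sub (projOn_sa R)), fun x => ?_⟩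
  have hcomp : projOn R x = projOn R (projOn M x) := by
    conv_lhs => rw [← projOn_comp_of_le h]
    rfl
  have hle : ‖projOn R x‖ ≤ ‖projOn M x‖ := by
    rw [hcomp]; exact projOn_norm_le R (projOn M x)
  have : ContinuousLinearMap.reApplyInnerSelf (projOn M - projOn R) x
      = ‖projOn M x‖ ^ 2 - ‖projOn R x‖ ^ 2 := by
    simp only [ContinuousLinearMap.reApplyInnerSelf, ContinuousLinearMap.sub_apply, inner_sub_left, map_sub]
    rw [re_inner_projOn, re_inner_projOn]
  rw [this]
  have := pow_le_pow_left₀ (norm_nonneg _) hle 2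
  linarith

lemma re_inner_selfAdj_sq {A : H →L[ℂ] H} (hA : IsSelfAdjoint A) (x : H) :
    RCLike.re ⟪(A ∘L A) x, x⟫ = ‖A x‖ ^ 2 := by
  have h := ContinuousLinearMap.adjoint_inner_left A x (A x)
  rw [hA.adjoint_eq] at h
  rw [ContinuousLinearMap.comp_apply, h, inner_self_eq_norm_sq]

theorem stmt11 (T : H →L[ℂ] H)
    (hX : ∃ P Q : H →L[ℂ] H, IsOrthoProj P ∧ IsOrthoProj Q ∧ T = P ∘L Q)
    (M N : Submodule ℂ H) [CompleteSpace M] [CompleteSpace N]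
    (hMN : T = projOn M ∘L projOn N) :
    (∀ x : H,
        ‖(projOn M - projOn N) x‖ ≥
          ‖(projOn (LinearMap.range (T : H →ₗ[ℂ] H)).topologicalClosure -
              projOn (LinearMap.ker (T : H →ₗ[ℂ] H))ᗮ) x‖) ∧
      ((projOn M - projOn N) ∘L (projOn M - projOn N) -
          (projOn (LinearMap.range (T : H →ₗ[ℂ] H)).topologicalClosure - projOn (LinearMap.ker (T : H →ₗ[ℂ] H))ᗮ) ∘L
            (projOn (LinearMap.range (T : H →ₗ[ℂ] H)).topologicalClosure -
              projOn (LinearMap.ker (T : H →ₗ[ℂ] H))ᗮ)).IsPositive := by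
  clear hX
  set R : Submodule ℂ H := (LinearMap.range (T : H →ₗ[ℂ] H)).topologicalClosure with hR
  set K : Submodule ℂ H := (LinearMap.ker (T : H →ₗ[ℂ] H))ᗮ with hK
  haveI : CompleteSpace (LinearMap.ker (T : H →ₗ[ℂ] H)) :=
    (ContinuousLinearMap.isClosed_ker T).completeSpace_coe
  have hMclosed : IsClosed (M : Set H) :=
    (completeSpace_coe_iff_isComplete.mp ‹_›).isClosed
  have hRM : R ≤ M := by
    refine Submodule.topologicalClosure_minimal _ ?_ hMclosed
    rintro y ⟨x, rfl⟩
    rw [hMN]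
    exact projOn_mem M _
  have hNker : Nᗮ ≤ LinearMap.ker (T : H →ₗ[ℂ] H) := by
    intro x hx
    have h0 : projOn N x = 0 := by
      rw [projOn_apply, Submodule.orthogonalProjectionOnto_apply_of_mem_orthogonal hx]
      rfl
    rw [LinearMap.mem_ker, hMN, ContinuousLinearMap.coe_coe, ContinuousLinearMap.comp_apply, h0, map_zero]
  have hKN : K ≤ N := by
    rw [hK, ← N.orthogonal_orthogonal]
    exact Submodule.orthogonal_le hNker
  -- the key identity : P_R ∘ P_K = T
  have hT : projOn R ∘L projOn K = T := by
    ext x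
    set y := projOn K x with hy
    have hxy : x - y ∈ LinearMap.ker (T : H →ₗ[ℂ] H) := by
      have h1 : x - y ∈ Kᗮ := Submodule.sub_starProjection_mem_orthogonal x
      rwa [hK, Submodule.orthogonal_orthogonal] at h1
    have hTx : T x = T y := by
      have h0 : T (x - y) = 0 := hxy
      rw [map_sub, sub_eq_zero] at h0
      exact h0
    have hyN : y ∈ N := hKN (projOn_mem K x)
    have hTy : T y = projOn M y := by
      rw [hMN, ContinuousLinearMap.comp_apply, projOn_eq_self N hyN]
    have hmemR : projOn M y ∈ R := by
      rw [← hTy]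
      exact (LinearMap.range (T : H →ₗ[ℂ] H)).le_topologicalClosure ⟨y, rfl⟩
    have hproj : projOn R y = projOn M y := by
      refine Submodule.eq_starProjection_of_mem_orthogonal hmemR ?_
      exact Submodule.orthogonal_le hRM (Submodule.sub_starProjection_mem_orthogonal y)
    rw [ContinuousLinearMap.comp_apply, ← hy, hproj, ← hTy, ← hTx]
  -- adjoints
  have hadj1 : ContinuousLinearMap.adjoint T = projOn N ∘L projOn M := by
    rw [hMN, ContinuousLinearMap.adjoint_comp, (projOn_sa M).adjoint_eq,
      (projOn_sa N).adjoint_eq]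
  have hadj2 : ContinuousLinearMap.adjoint T = projOn K ∘L projOn R := by
    have h2 := congrArg ContinuousLinearMap.adjoint hT
    rw [ContinuousLinearMap.adjoint_comp, (projOn_sa R).adjoint_eq,
      (projOn_sa K).adjoint_eq] at h2
    exact h2.symm
  have hQP : projOn N ∘L projOn M = projOn K ∘L projOn R := by
    rw [← hadj1, hadj2]
  -- the difference of squares
  have key : (projOn M - projOn N) ∘L (projOn M - projOn N) -
      (projOn R - projOn K) ∘L (projOn R - projOn K) =
      (projOn M - projOn R) + (projOn N - projOn K) := by
    simp only [ContinuousLinearMap.sub_comp, ContinuousLinearMap.comp_sub,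
      projOn_idem]
    rw [← hMN, hT, hQP]
    abel
  have hpos : ((projOn M - projOn N) ∘L (projOn M - projOn N) -
      (projOn R - projOn K) ∘L (projOn R - projOn K)).IsPositive := by
    rw [key]
    exact (isPositive_projOn_sub hRM).add (isPositive_projOn_sub hKN)
  refine ⟨fun x => ?_, hpos⟩
  have hsaA : IsSelfAdjoint (projOn M - projOn N) := (projOn_sa M).sub (projOn_sa N)
  have hsaB : IsSelfAdjoint (projOn R - projOn K) := (projOn_sa R).sub (projOn_sa K)
  have h0 := hpos.2 x
  rw [ContinuousLinearMap.reApplyInnerSelf, ContinuousLinearMap.sub_apply,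
    inner_sub_left, map_sub, re_inner_selfAdj_sq hsaA, re_inner_selfAdj_sq hsaB] at h0
  have hsq : ‖(projOn R - projOn K) x‖ ^ 2 ≤ ‖(projOn M - projOn N) x‖ ^ 2 := by linarith
  exact (pow_le_pow_iff_left₀ (norm_nonneg _) (norm_nonneg _) two_ne_zero).1 hsq
end

section
/- Let T be a product of two orthogonal projections on a Hilbert space H and suppose the range of T is not closed. Then for every pair of orthogonal projections (P, Q) with T = PQ, one has ‖P − Q‖ = 1. -/
open ContinuousLinearMap Submodule LinearMap

variable {H : Type*} [NormedAddCommGroup H] [InnerProductSpace ℂ H] [CompleteSpace H]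

local notation "⟪" x ", " y "⟫" => @inner ℂ _ _ x y

lemma aux_idem {P : H →L[ℂ] H} (hP : IsOrthoProj P) (x : H) : P (P x) = P x := by
  conv_rhs => rw [← hP.1]
  rfl

lemma aux_orth {P : H →L[ℂ] H} (hP : IsOrthoProj P) (u v : H) :
    ⟪P u, v - P v⟫ = 0 := by
  have h : ⟪P u, v - P v⟫ = ⟪u, P (v - P v)⟫ := by
    conv_lhs => rw [show P u = ContinuousLinearMap.adjoint P u by rw [hP.2]]
    rw [ContinuousLinearMap.adjoint_inner_left]
  rw [h, map_sub, aux_idem hP, sub_self, inner_zero_right]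

lemma aux_pythag {P : H →L[ℂ] H} (hP : IsOrthoProj P) (y : H) :
    ‖P y‖ ^ 2 + ‖y - P y‖ ^ 2 = ‖y‖ ^ 2 := by
  have h := norm_add_sq (𝕜 := ℂ) (P y) (y - P y)
  rw [aux_orth hP y y] at h
  simp at h
  linarith

lemma aux_norm_le {P : H →L[ℂ] H} (hP : IsOrthoProj P) (y : H) : ‖P y‖ ≤ ‖y‖ := by
  have h := aux_pythag hP y
  nlinarith [norm_nonneg (P y), norm_nonneg y, sq_nonneg ‖y - P y‖]

lemma aux_key {P Q : H →L[ℂ] H} (hP : IsOrthoProj P) (hQ : IsOrthoProj Q) (x : H) :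
    ‖(P - Q) x‖ ≤ ‖x‖ := by
  set a := P (x - Q x) with ha
  set b := Q x - P (Q x) with hb
  have hab : (P - Q) x = a - b := by
    simp only [ha, hb, ContinuousLinearMap.sub_apply, map_sub]
    abel
  have horth : ⟪a, b⟫ = 0 := aux_orth hP (x - Q x) (Q x)
  have hsq : ‖a - b‖ ^ 2 = ‖a‖ ^ 2 + ‖b‖ ^ 2 := by
    have h := norm_sub_sq (𝕜 := ℂ) a b
    rw [horth] at h
    simp at h
    linarith
  have h1 : ‖a‖ ≤ ‖x - Q x‖ := aux_norm_le hP _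
  have h2 : ‖b‖ ^ 2 ≤ ‖Q x‖ ^ 2 := by
    have := aux_pythag hP (Q x)
    nlinarith [sq_nonneg ‖P (Q x)‖]
  have h3 : ‖Q x‖ ^ 2 + ‖x - Q x‖ ^ 2 = ‖x‖ ^ 2 := aux_pythag hQ x
  rw [hab]
  have : ‖a - b‖ ^ 2 ≤ ‖x‖ ^ 2 := by nlinarith [norm_nonneg a, norm_nonneg (x - Q x)]
  nlinarith [norm_nonneg (a - b), norm_nonneg x]

theorem stmt12 (T : H →L[ℂ] H)
    (hX : ∃ P Q : H →L[ℂ] H, IsOrthoProj P ∧ IsOrthoProj Q ∧ T = P ∘L Q)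
    (hcl : ¬ IsClosed ((LinearMap.range (T : H →ₗ[ℂ] H) : Submodule ℂ H) : Set H)) :
    ∀ P Q : H →L[ℂ] H, IsOrthoProj P → IsOrthoProj Q → T = P ∘L Q →
      ‖P - Q‖ = 1 := by
  intro P Q hP hQ hT
  by_contra hne
  have hle : ‖P - Q‖ ≤ 1 :=
    ContinuousLinearMap.opNorm_le_bound _ zero_le_one (fun x => by
      simpa using aux_key hP hQ x)
  have hlt : ‖P - Q‖ < 1 := lt_of_le_of_ne hle hne
  set c := ‖P - Q‖ with hc
  have hc0 : 0 ≤ c := norm_nonneg _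
  have hpos : 0 < 1 - c := by linarith
  apply hcl
  -- range Q is closed
  set R : Submodule ℂ H := LinearMap.range (Q : H →ₗ[ℂ] H) with hR
  have hmemR : ∀ x, x ∈ R ↔ Q x = x := by
    intro x
    constructor
    · rintro ⟨y, rfl⟩; exact aux_idem hQ y
    · intro h; exact ⟨x, h⟩
  have hRcl : IsClosed (R : Set H) := by
    have : (R : Set H) = {x | Q x = x} := by
      ext x; exact hmemR x
    rw [this]
    exact isClosed_eq Q.continuous continuous_id
  haveI : CompleteSpace R := hRcl.completeSpace_coe
  set f : R →L[ℂ] H := P.comp R.subtypeL with hf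
  have hbound : ∀ x : R, ‖(x : H)‖ ≤ (1 - c)⁻¹ * ‖f x‖ := by
    intro x
    have hQx : Q (x : H) = (x : H) := (hmemR x).mp x.2
    have hPx : P (x : H) = (x : H) + (P - Q) (x : H) := by
      simp [ContinuousLinearMap.sub_apply, hQx]
    have h1 : ‖(x : H)‖ - c * ‖(x : H)‖ ≤ ‖P (x : H)‖ := by
      have h2 : ‖(P - Q) (x : H)‖ ≤ c * ‖(x : H)‖ := (P - Q).le_opNorm _
      have h3 : ‖(x : H)‖ ≤ ‖P (x : H)‖ + ‖(P - Q) (x : H)‖ := by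
        calc ‖(x : H)‖ = ‖P (x : H) - (P - Q) (x : H)‖ := by rw [hPx]; congr 1; abel
          _ ≤ ‖P (x : H)‖ + ‖(P - Q) (x : H)‖ := norm_sub_le _ _
      linarith
    have hfx : f x = P (x : H) := rfl
    rw [hfx, le_inv_mul_iff₀ hpos]
    nlinarith
  have hanti : AntilipschitzWith ⟨(1 - c)⁻¹, by positivity⟩ f :=
    ContinuousLinearMap.antilipschitz_of_bound f hbound
  have hclosed : IsClosed (Set.range f) := hanti.isClosed_range f.uniformContinuous
  have hrange : ((LinearMap.range (T : H →ₗ[ℂ] H) : Submodule ℂ H) : Set H) = Set.range f := by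
    ext x
    simp only [SetLike.mem_coe, LinearMap.mem_range, Set.mem_range]
    constructor
    · rintro ⟨y, rfl⟩
      exact ⟨⟨Q y, ⟨y, rfl⟩⟩, by simp [hT, hf]⟩
    · rintro ⟨⟨z, y, rfl⟩, rfl⟩
      exact ⟨y, by simp [hT, hf]⟩
  rw [hrange]
  exact hclosed
end

section
/- Let T = PQ for orthogonal projections P, Q on a Hilbert space H, and let T = V|T| be its polar decomposition. Then V²V* is a positive operator, cl R(V²V*) = R(V), and moreover VP_{R(V)} = |T*| = (TT*)^{1/2}. -/
open ContinuousLinearMap Submodule LinearMap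

variable {H : Type*} [NormedAddCommGroup H] [InnerProductSpace ℂ H] [CompleteSpace H]

/-- `V` is a partial isometry: it is isometric on the orthogonal complement of its kernel. -/
def IsPartialIsometry (V : H →L[ℂ] H) : Prop :=
  ∀ x ∈ (LinearMap.ker (V : H →ₗ[ℂ] H))ᗮ, ‖V x‖ = ‖x‖

open scoped ComplexInnerProductSpace

section Aux

set_option synthInstance.maxHeartbeats 1000000 in
set_option maxHeartbeats 1000000 in
theorem aux_sqrt_unique (A B : H →L[ℂ] H) (hA : A.IsPositive) (hB : B.IsPositive)
    (h : A ∘L A = B ∘L B) : A = B := by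
  have hA' : (0:H →L[ℂ] H) ≤ A := (ContinuousLinearMap.nonneg_iff_isPositive A).mpr hA
  have hB' : (0:H →L[ℂ] H) ≤ B := (ContinuousLinearMap.nonneg_iff_isPositive B).mpr hB
  have h' : A * A = B * B := h
  have h1 : CFC.sqrt (B * B) = A := CFC.sqrt_unique h' hA'
  have h2 : CFC.sqrt (B * B) = B := CFC.sqrt_unique rfl hB'
  rw [← h1, h2]

/-- `(range S)ᗮ = ker S†`. -/
theorem aux_orth_range (S : H →L[ℂ] H) :
    (LinearMap.range ((S : H →L[ℂ] H) : H →ₗ[ℂ] H))ᗮ = LinearMap.ker ((ContinuousLinearMap.adjoint S : H →L[ℂ] H) : H →ₗ[ℂ] H) := by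
  ext x
  simp only [Submodule.mem_orthogonal, LinearMap.mem_ker]
  constructor
  · intro h
    have h1 : ⟪S (ContinuousLinearMap.adjoint S x), x⟫ = 0 :=
      h _ (LinearMap.mem_range_self _ _)
    have h2 : ⟪ContinuousLinearMap.adjoint S x, ContinuousLinearMap.adjoint S x⟫ = 0 := by
      rw [ContinuousLinearMap.adjoint_inner_left, ← inner_conj_symm, h1, map_zero]
    exact inner_self_eq_zero.mp h2
  · rintro h u ⟨y, rfl⟩
    simp only [ContinuousLinearMap.coe_coe] at h ⊢
    rw [← ContinuousLinearMap.adjoint_inner_right, h, inner_zero_right]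

theorem aux_closure_range (S : H →L[ℂ] H) :
    (LinearMap.range ((S : H →L[ℂ] H) : H →ₗ[ℂ] H)).topologicalClosure =
      (LinearMap.ker ((ContinuousLinearMap.adjoint S : H →L[ℂ] H) : H →ₗ[ℂ] H))ᗮ := by
  rw [← aux_orth_range, Submodule.orthogonal_orthogonal_eq_closure]

end Aux

set_option maxHeartbeats 2000000 in
set_option synthInstance.maxHeartbeats 1000000 in
theorem stmt18 (P Q T V absT : H →L[ℂ] H) (hP : IsOrthoProj P) (hQ : IsOrthoProj Q)
    (hT : T = P ∘L Q)
    (hV : IsPartialIsometry V) (hker : LinearMap.ker (V : H →ₗ[ℂ] H) = LinearMap.ker (T : H →ₗ[ℂ] H))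
    (habs_pos : absT.IsPositive)
    (habs_sq : absT ∘L absT = ContinuousLinearMap.adjoint T ∘L T)
    (hpolar : T = V ∘L absT) :
    (V ∘L V ∘L ContinuousLinearMap.adjoint V).IsPositive ∧
      (LinearMap.range ((V ∘L V ∘L ContinuousLinearMap.adjoint V : H →L[ℂ] H) : H →ₗ[ℂ] H)).topologicalClosure =
        LinearMap.range (V : H →ₗ[ℂ] H) ∧
      ∃ hcl : IsClosed ((LinearMap.range (V : H →ₗ[ℂ] H) : Submodule ℂ H) : Set H),
        ∀ B : H →L[ℂ] H, B.IsPositive →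
          B ∘L B = T ∘L ContinuousLinearMap.adjoint T →
          V ∘L projOnc (LinearMap.range (V : H →ₗ[ℂ] H)) hcl = B := by
  haveI : CompleteSpace (LinearMap.ker ((V : H →L[ℂ] H) : H →ₗ[ℂ] H) : Submodule ℂ H) :=
    (isClosed_ker V).completeSpace_coe
  have hAsa : ContinuousLinearMap.adjoint absT = absT := by
    rw [← ContinuousLinearMap.star_eq_adjoint]; exact habs_pos.isSelfAdjoint
  have hAinner : ∀ x y : H, ⟪absT x, y⟫ = ⟪x, absT y⟫ := fun x y => by
    rw [← hAsa, ContinuousLinearMap.adjoint_inner_left, hAsa]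
  -- norms agree
  have hnorm : ∀ x : H, ‖absT x‖ = ‖T x‖ := by
    intro x
    have h1 : ⟪absT (absT x), x⟫ = ⟪ContinuousLinearMap.adjoint T (T x), x⟫ := by
      have := congrArg (fun S : H →L[ℂ] H => ⟪S x, x⟫) habs_sq
      simpa using this
    have h2 : ⟪absT x, absT x⟫ = ⟪T x, T x⟫ := by
      rw [← hAinner, h1, ContinuousLinearMap.adjoint_inner_left]
    have h4 : (‖absT x‖ : ℝ) ^ 2 = (‖T x‖ : ℝ) ^ 2 := by
      rw [← inner_self_eq_norm_sq (𝕜 := ℂ), ← inner_self_eq_norm_sq (𝕜 := ℂ), h2]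
    nlinarith [norm_nonneg (absT x), norm_nonneg (T x)]
  have hkerA : LinearMap.ker ((absT : H →L[ℂ] H) : H →ₗ[ℂ] H) = LinearMap.ker ((V : H →L[ℂ] H) : H →ₗ[ℂ] H) := by
    rw [hker]; ext x
    simp only [LinearMap.mem_ker, ContinuousLinearMap.coe_coe]
    constructor
    · intro h; rwa [← norm_eq_zero, ← hnorm, norm_eq_zero]
    · intro h; rwa [← norm_eq_zero, hnorm, norm_eq_zero]
  have kerVA : ∀ u : H, V u = 0 → absT u = 0 := by
    intro u hu
    have : u ∈ LinearMap.ker ((absT : H →L[ℂ] H) : H →ₗ[ℂ] H) := by rw [hkerA]; exact hu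
    exact this
  have kerAV : ∀ u : H, absT u = 0 → V u = 0 := by
    intro u hu
    have : u ∈ LinearMap.ker ((V : H →L[ℂ] H) : H →ₗ[ℂ] H) := by rw [← hkerA]; exact hu
    exact this
  -- the isometry on (ker V)ᗮ
  let f : ((LinearMap.ker ((V : H →L[ℂ] H) : H →ₗ[ℂ] H))ᗮ : Submodule ℂ H) →ₗᵢ[ℂ] H :=
    { toLinearMap := V.toLinearMap.comp (LinearMap.ker ((V : H →L[ℂ] H) : H →ₗ[ℂ] H))ᗮ.subtype
      norm_map' := fun x => hV x x.2 }
  have hf : ∀ x : ((LinearMap.ker ((V : H →L[ℂ] H) : H →ₗ[ℂ] H))ᗮ : Submodule ℂ H), f x = V x := fun _ => rfl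
  -- V† V = id on (ker V)ᗮ
  have hVtV : ∀ x ∈ (LinearMap.ker ((V : H →L[ℂ] H) : H →ₗ[ℂ] H))ᗮ, ContinuousLinearMap.adjoint V (V x) = x := by
    intro x hx
    apply ext_inner_right ℂ
    intro y
    obtain ⟨a, ha, b, hb, rfl⟩ := (LinearMap.ker ((V : H →L[ℂ] H) : H →ₗ[ℂ] H)).exists_add_mem_mem_orthogonal y
    have hVa : V a = 0 := ha
    have hinn : ⟪V x, V b⟫ = ⟪x, b⟫ := by
      have := f.inner_map_map ⟨x, hx⟩ ⟨b, hb⟩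
      simpa [hf] using this
    have hxa : ⟪x, a⟫ = 0 := Submodule.inner_left_of_mem_orthogonal ha hx
    rw [ContinuousLinearMap.adjoint_inner_left, map_add, hVa, zero_add, hinn,
      inner_add_right, hxa, zero_add]
  -- range of absT lands in (ker V)ᗮ
  have hAorth : ∀ z : H, absT z ∈ (LinearMap.ker ((V : H →L[ℂ] H) : H →ₗ[ℂ] H))ᗮ := by
    intro z
    rw [← hkerA]
    intro u hu
    have hu0 : absT u = 0 := hu
    rw [← hAinner, hu0, inner_zero_left]
  have hVtVA : ∀ z : H, ContinuousLinearMap.adjoint V (V (absT z)) = absT z :=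
    fun z => hVtV _ (hAorth z)
  -- key algebraic identity : T T† T = T T
  have hPP : ∀ y, P (P y) = P y := fun y => DFunLike.congr_fun hP.1 y
  have hQQ : ∀ y, Q (Q y) = Q y := fun y => DFunLike.congr_fun hQ.1 y
  have hTadjPQ : ContinuousLinearMap.adjoint T = Q ∘L P := by
    rw [hT, ContinuousLinearMap.adjoint_comp, hP.2, hQ.2]
  have hkey : ∀ x, T (ContinuousLinearMap.adjoint T (T x)) = T (T x) := by
    intro x
    rw [hTadjPQ, hT]
    simp only [ContinuousLinearMap.comp_apply]
    rw [hQQ, hPP]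
  -- T† = absT ∘ V†
  have hTadj : ContinuousLinearMap.adjoint T =
      absT ∘L ContinuousLinearMap.adjoint V := by
    rw [hpolar, ContinuousLinearMap.adjoint_comp, hAsa]
  have hTpt : ∀ x, T x = V (absT x) := fun x => by rw [hpolar]; rfl
  have hTadjpt : ∀ x, ContinuousLinearMap.adjoint T x =
      absT (ContinuousLinearMap.adjoint V x) := fun x => by rw [hTadj]; rfl
  have step : ∀ x, ContinuousLinearMap.adjoint T (T x) = absT (absT x) := by
    intro x; rw [hTadjpt, hTpt, hVtVA]
  have e1 : ∀ x, V (absT (V (absT x))) = V (absT (absT (absT x))) := by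
    intro x
    have h := hkey x
    rw [step x] at h
    rw [hTpt (absT (absT x)), hTpt x, hTpt (V (absT x))] at h
    exact h.symm
  have e2 : ∀ x, absT (absT (absT (absT x))) = absT (absT (V (absT x))) := by
    intro x
    have h0 : V (absT (V (absT x)) - absT (absT (absT x))) = 0 := by
      rw [map_sub, e1 x, sub_self]
    have h1 := kerVA _ h0
    rw [map_sub, sub_eq_zero] at h1
    exact h1.symm
  have hVVA : ∀ x, V (V (absT x)) = V (absT (absT x)) := by
    intro x
    have h0 : absT (absT (V (absT x) - absT (absT x))) = 0 := by
      rw [map_sub, map_sub, e2 x, sub_self]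
    have h1 : ⟪absT (V (absT x) - absT (absT x)),
        absT (V (absT x) - absT (absT x))⟫ = 0 := by
      rw [hAinner, h0, inner_zero_right]
    have h2 : absT (V (absT x) - absT (absT x)) = 0 := inner_self_eq_zero.mp h1
    have h3 := kerAV _ h2
    rw [map_sub, sub_eq_zero] at h3
    exact h3
  -- closure of range absT
  have hclr : (LinearMap.range ((absT : H →L[ℂ] H) : H →ₗ[ℂ] H)).topologicalClosure = (LinearMap.ker ((V : H →L[ℂ] H) : H →ₗ[ℂ] H))ᗮ := by
    rw [aux_closure_range, hAsa, hkerA]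
  -- V ∘ V = V ∘ absT
  have hW : V ∘L V = V ∘L absT := by
    have h1 : (LinearMap.range ((absT : H →L[ℂ] H) : H →ₗ[ℂ] H)).topologicalClosure ≤
        LinearMap.ker ((V ∘L V - V ∘L absT : H →L[ℂ] H) : H →ₗ[ℂ] H) := by
      apply Submodule.topologicalClosure_minimal
      · rintro _ ⟨z, rfl⟩
        simp only [LinearMap.mem_ker, ContinuousLinearMap.coe_coe, ContinuousLinearMap.sub_apply,
          ContinuousLinearMap.comp_apply]
        rw [hVVA z, sub_self]
      · exact isClosed_ker _
    have h2 : LinearMap.ker ((V : H →L[ℂ] H) : H →ₗ[ℂ] H) ≤ LinearMap.ker ((V ∘L V - V ∘L absT : H →L[ℂ] H) : H →ₗ[ℂ] H) := by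
      intro z hz
      have hz' : V z = 0 := hz
      have hz2 : absT z = 0 := kerVA z hz'
      simp only [LinearMap.mem_ker, ContinuousLinearMap.coe_coe, ContinuousLinearMap.sub_apply,
        ContinuousLinearMap.comp_apply, hz', hz2, map_zero, sub_zero]
    have h3 : (⊤ : Submodule ℂ H) ≤ LinearMap.ker ((V ∘L V - V ∘L absT : H →L[ℂ] H) : H →ₗ[ℂ] H) := by
      rw [← Submodule.sup_orthogonal_of_hasOrthogonalProjection (K := LinearMap.ker ((V : H →L[ℂ] H) : H →ₗ[ℂ] H))]
      exact sup_le h2 (hclr ▸ h1)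
    have h4 : V ∘L V - V ∘L absT = 0 := by
      ext x
      exact h3 (Submodule.mem_top : x ∈ ⊤)
    rwa [sub_eq_zero] at h4
  have hVVpt : ∀ z, V (V z) = V (absT z) := fun z => DFunLike.congr_fun hW z
  -- positivity
  have hassoc : V ∘L V ∘L ContinuousLinearMap.adjoint V =
      V ∘L absT ∘L ContinuousLinearMap.adjoint V := by
    ext x
    simp only [ContinuousLinearMap.comp_apply]
    exact hVVpt _
  have hpos : (V ∘L V ∘L ContinuousLinearMap.adjoint V).IsPositive := by
    rw [hassoc]
    exact habs_pos.conj_adjoint V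
  -- square
  have hB0sq : (V ∘L V ∘L ContinuousLinearMap.adjoint V) ∘L
      (V ∘L V ∘L ContinuousLinearMap.adjoint V) = T ∘L ContinuousLinearMap.adjoint T := by
    ext x
    simp only [ContinuousLinearMap.comp_apply]
    rw [hVVpt (ContinuousLinearMap.adjoint V x),
      hVtVA (ContinuousLinearMap.adjoint V x),
      hVVpt (absT (ContinuousLinearMap.adjoint V x)),
      hTpt (ContinuousLinearMap.adjoint T x), hTadjpt x]
  -- range V is closed
  have hrangeset : ((LinearMap.range ((V : H →L[ℂ] H) : H →ₗ[ℂ] H) : Submodule ℂ H) : Set H) = Set.range f := by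
    ext z
    simp only [SetLike.mem_coe, LinearMap.mem_range, Set.mem_range]
    constructor
    · rintro ⟨x, rfl⟩
      obtain ⟨a, ha, b, hb, rfl⟩ := (LinearMap.ker ((V : H →L[ℂ] H) : H →ₗ[ℂ] H)).exists_add_mem_mem_orthogonal x
      refine ⟨⟨b, hb⟩, ?_⟩
      have hVa : V a = 0 := ha
      rw [hf, ContinuousLinearMap.coe_coe, map_add, hVa, zero_add]
    · rintro ⟨u, rfl⟩
      exact ⟨u, rfl⟩
  have hcl : IsClosed ((LinearMap.range ((V : H →L[ℂ] H) : H →ₗ[ℂ] H) : Submodule ℂ H) : Set H) := by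
    rw [hrangeset]
    exact f.isometry.isClosedEmbedding.isClosed_range
  -- closure of range T = range V
  have hclT : (LinearMap.range ((T : H →L[ℂ] H) : H →ₗ[ℂ] H)).topologicalClosure = LinearMap.range ((V : H →L[ℂ] H) : H →ₗ[ℂ] H) := by
    apply le_antisymm
    · apply Submodule.topologicalClosure_minimal
      · rintro _ ⟨x, rfl⟩
        exact ⟨absT x, (hTpt x).symm⟩
      · exact hcl
    · rintro _ ⟨x, rfl⟩
      obtain ⟨a, ha, b, hb, rfl⟩ := (LinearMap.ker ((V : H →L[ℂ] H) : H →ₗ[ℂ] H)).exists_add_mem_mem_orthogonal x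
      have hVa : V a = 0 := ha
      have hVx : V (a + b) = V b := by rw [map_add, hVa, zero_add]
      rw [ContinuousLinearMap.coe_coe, hVx]
      have hbcl : (b : H) ∈ closure ((LinearMap.range ((absT : H →L[ℂ] H) : H →ₗ[ℂ] H) : Submodule ℂ H) : Set H) := by
        have hb' : b ∈ (LinearMap.range ((absT : H →L[ℂ] H) : H →ₗ[ℂ] H)).topologicalClosure := by
          rw [hclr]; exact hb
        rwa [← Submodule.topologicalClosure_coe, SetLike.mem_coe]
      have himg : V b ∈ closure (V '' ((LinearMap.range ((absT : H →L[ℂ] H) : H →ₗ[ℂ] H) : Submodule ℂ H) : Set H)) :=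
        (image_closure_subset_closure_image V.continuous) ⟨b, hbcl, rfl⟩
      have hsub : V '' ((LinearMap.range ((absT : H →L[ℂ] H) : H →ₗ[ℂ] H) : Submodule ℂ H) : Set H)
          ⊆ ((LinearMap.range ((T : H →L[ℂ] H) : H →ₗ[ℂ] H) : Submodule ℂ H) : Set H) := by
        rintro _ ⟨w, hw, rfl⟩
        obtain ⟨z, rfl⟩ := hw
        exact ⟨z, hTpt z⟩
      have hfin : V b ∈ closure ((LinearMap.range ((T : H →L[ℂ] H) : H →ₗ[ℂ] H) : Submodule ℂ H) : Set H) :=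
        closure_mono hsub himg
      rw [← SetLike.mem_coe, Submodule.topologicalClosure_coe]
      exact hfin
  -- closure of range of V V V† = range V
  have hB0sa : ContinuousLinearMap.adjoint (V ∘L V ∘L ContinuousLinearMap.adjoint V)
      = V ∘L V ∘L ContinuousLinearMap.adjoint V := by
    rw [← ContinuousLinearMap.star_eq_adjoint]; exact hpos.isSelfAdjoint
  have hkerB0 : LinearMap.ker ((V ∘L V ∘L ContinuousLinearMap.adjoint V : H →L[ℂ] H) : H →ₗ[ℂ] H)
      = LinearMap.ker ((ContinuousLinearMap.adjoint T : H →L[ℂ] H) : H →ₗ[ℂ] H) := by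
    ext x
    simp only [LinearMap.mem_ker, ContinuousLinearMap.coe_coe, ContinuousLinearMap.comp_apply]
    constructor
    · intro h
      rw [hVVpt] at h
      have h1 : absT (absT (ContinuousLinearMap.adjoint V x)) = 0 := kerVA _ h
      have h2 : absT (ContinuousLinearMap.adjoint V x) ∈ LinearMap.ker ((absT : H →L[ℂ] H) : H →ₗ[ℂ] H) := h1
      have h3 : absT (ContinuousLinearMap.adjoint V x) ∈ (LinearMap.ker ((V : H →L[ℂ] H) : H →ₗ[ℂ] H))ᗮ := hAorth _
      rw [hkerA] at h2
      have h4 : absT (ContinuousLinearMap.adjoint V x) = 0 := by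
        have := Submodule.inner_right_of_mem_orthogonal h2 h3
        exact inner_self_eq_zero.mp this
      rw [hTadjpt, h4]
    · intro h
      rw [hTadjpt] at h
      have h1 : V (ContinuousLinearMap.adjoint V x) = 0 := kerAV _ h
      rw [h1, map_zero]
  have hclB0 : (LinearMap.range ((V ∘L V ∘L ContinuousLinearMap.adjoint V : H →L[ℂ] H) : H →ₗ[ℂ] H)).topologicalClosure
      = LinearMap.range ((V : H →L[ℂ] H) : H →ₗ[ℂ] H) := by
    rw [aux_closure_range, hB0sa, hkerB0, ← aux_closure_range, hclT]
  refine ⟨hpos, hclB0, hcl, ?_⟩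
  intro B hBpos hBsq
  have hBeq : B = V ∘L V ∘L ContinuousLinearMap.adjoint V :=
    aux_sqrt_unique B _ hBpos hpos (by rw [hBsq, hB0sq])
  rw [hBeq]
  haveI : CompleteSpace (LinearMap.range ((V : H →L[ℂ] H) : H →ₗ[ℂ] H) : Submodule ℂ H) := hcl.completeSpace_coe
  ext x
  have hproj : (projOnc (LinearMap.range ((V : H →L[ℂ] H) : H →ₗ[ℂ] H)) hcl) x
      = (orthogonalProjection (LinearMap.range ((V : H →L[ℂ] H) : H →ₗ[ℂ] H)) x : H) := rfl
  simp only [ContinuousLinearMap.comp_apply, hproj]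
  have hpmem : (orthogonalProjection (LinearMap.range ((V : H →L[ℂ] H) : H →ₗ[ℂ] H)) x : H) ∈ LinearMap.range ((V : H →L[ℂ] H) : H →ₗ[ℂ] H) :=
    SetLike.coe_mem _
  have hxp : x - (orthogonalProjection (LinearMap.range ((V : H →L[ℂ] H) : H →ₗ[ℂ] H)) x : H) ∈ (LinearMap.range ((V : H →L[ℂ] H) : H →ₗ[ℂ] H))ᗮ :=
    Submodule.sub_starProjection_mem_orthogonal x
  obtain ⟨c, hc⟩ := hpmem
  obtain ⟨a, ha, b, hb, rfl⟩ := (LinearMap.ker ((V : H →L[ℂ] H) : H →ₗ[ℂ] H)).exists_add_mem_mem_orthogonal c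
  have hVa : V a = 0 := ha
  have hpb : (orthogonalProjection (LinearMap.range ((V : H →L[ℂ] H) : H →ₗ[ℂ] H)) x : H) = V b := by
    rw [← hc, ContinuousLinearMap.coe_coe, map_add, hVa, zero_add]
  have hadjz : ContinuousLinearMap.adjoint V
      (x - (orthogonalProjection (LinearMap.range ((V : H →L[ℂ] H) : H →ₗ[ℂ] H)) x : H)) = 0 := by
    apply ext_inner_right ℂ
    intro w
    rw [ContinuousLinearMap.adjoint_inner_left, inner_zero_left]
    exact Submodule.inner_left_of_mem_orthogonal (LinearMap.mem_range_self (V : H →ₗ[ℂ] H) w) hxp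
  have hadj : ContinuousLinearMap.adjoint V x = b := by
    have hsplit : ContinuousLinearMap.adjoint V x
        = ContinuousLinearMap.adjoint V
            (x - (orthogonalProjection (LinearMap.range ((V : H →L[ℂ] H) : H →ₗ[ℂ] H)) x : H))
          + ContinuousLinearMap.adjoint V
            (orthogonalProjection (LinearMap.range ((V : H →L[ℂ] H) : H →ₗ[ℂ] H)) x : H) := by
      rw [← map_add, sub_add_cancel]
    rw [hsplit, hadjz, zero_add, hpb, hVtV b hb]
  rw [hadj, ← hpb]
end
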